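/- Let 1 ≤ n ≤ d be integers, μ a Radon measure on ℝ^d, and B a ball intersecting supp μ. Then α_μ(B) ≤ α_{μ,1}(B) ≤ α_{μ,2}(B). -/

import Mathlib

open MeasureTheory Metric Set

noncomputable section

abbrev Euc (d : ℕ) : Type := EuclideanSpace ℝ (Fin d)

/-- An affine `n`-plane: a nonempty affine subspace whose direction has dimension `n`. -/
def IsAffinePlane {d : ℕ} (n : ℕ) (L : AffineSubspace ℝ (Euc d)) : Prop :=
  (L : Set (Euc d)).Nonempty ∧ Module.finrank ℝ L.direction = n

/-- The support of a measure. -/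
def measureSupport {d : ℕ} (μ : Measure (Euc d)) : Set (Euc d) :=
  { x | ∀ r > 0, 0 < μ (ball x r) }

/-- The quantity inside the infimum defining `β_{μ,p}(x,r)`, for a given plane `L`. -/
noncomputable def betaVal {d : ℕ} (p : ℝ) (μ : Measure (Euc d)) (x : Euc d) (r : ℝ)
    (L : AffineSubspace ℝ (Euc d)) : ℝ :=
  ((μ (ball x (3 * r))).toReal⁻¹ *
    ∫ y in ball x r, (Metric.infDist y (L : Set (Euc d)) / r) ^ p ∂μ) ^ (1 / p)

/-- The coefficient `β_{μ,p}(x,r)`: the infimum is over affine `n`-planes meeting `B(x,r)`. -/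
noncomputable def betaCoef {d : ℕ} (n : ℕ) (p : ℝ) (μ : Measure (Euc d)) (x : Euc d)
    (r : ℝ) : ℝ :=
  sInf { b | ∃ L : AffineSubspace ℝ (Euc d), IsAffinePlane n L ∧
    ((L : Set (Euc d)) ∩ ball x r).Nonempty ∧ b = betaVal p μ x r L }

/-- `Lip₁(B)`: 1-Lipschitz functions supported inside `B`. -/
def Lip1 {d : ℕ} (B : Set (Euc d)) : Set (Euc d → ℝ) :=
  { φ | LipschitzWith 1 φ ∧ tsupport φ ⊆ B }

/-- `F_B(μ,ν) = sup { |∫φ dμ − ∫φ dν| : φ ∈ Lip₁(B) }`. -/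
noncomputable def Fdist {d : ℕ} (B : Set (Euc d)) (μ ν : Measure (Euc d)) : ℝ :=
  sSup { t | ∃ φ ∈ Lip1 B, t = |(∫ x, φ x ∂μ) - ∫ x, φ x ∂ν| }

/-- The flat measure `c · H^n|_L`. -/
noncomputable def flatMeasure {d : ℕ} (n : ℕ) (c : ℝ) (L : AffineSubspace ℝ (Euc d)) :
    Measure (Euc d) :=
  ENNReal.ofReal c • (μH[(n : ℝ)]).restrict (L : Set (Euc d))

/-- The quantity inside the infimum defining `α_μ(x,r)`, for a given `c ≥ 0` and plane `L`. -/
noncomputable def alphaVal {d : ℕ} (n : ℕ) (μ : Measure (Euc d)) (x : Euc d) (r : ℝ)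
    (c : ℝ) (L : AffineSubspace ℝ (Euc d)) : ℝ :=
  Fdist (ball x r) μ (flatMeasure n c L) / (r * (μ (ball x (3 * r))).toReal)

/-- The coefficient `α_μ(x,r)`. -/
noncomputable def alphaCoef {d : ℕ} (n : ℕ) (μ : Measure (Euc d)) (x : Euc d) (r : ℝ) : ℝ :=
  sInf { a | ∃ c : ℝ, 0 ≤ c ∧ ∃ L : AffineSubspace ℝ (Euc d), IsAffinePlane n L ∧
    a = alphaVal n μ x r c L }

/-- The Wasserstein distance `W_p(σ,ν)`: infimum of `(∫ |x−y|^p dπ)^{1/p}` over all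
transport plans `π` with marginals `σ` and `ν`. -/
noncomputable def Wasserstein {d : ℕ} (p : ℝ) (σ ν : Measure (Euc d)) : ℝ :=
  sInf { w | ∃ π : Measure (Euc d × Euc d),
    π.map Prod.fst = σ ∧ π.map Prod.snd = ν ∧
    w = (∫ z, dist z.1 z.2 ^ p ∂π) ^ (1 / p) }

/-- The properties of the fixed radial bump function `φ` used in the definition of
`α_{μ,p}`. -/
def IsBumpFn {d : ℕ} (φ : Euc d → ℝ) : Prop :=
  (∃ g : ℝ → ℝ, ∀ x, φ x = g ‖x‖) ∧
  (∃ K : NNReal, LipschitzWith K φ) ∧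
  (∀ x, φ x ∈ Icc (0 : ℝ) 1) ∧
  (∀ x ∈ ball (0 : Euc d) 2, φ x = 1) ∧
  Function.support φ ⊆ ball (0 : Euc d) 3 ∧
  ∃ c > (0 : ℝ), ∀ x ∈ ball (0 : Euc d) 3,
    c⁻¹ * Metric.infDist x (sphere (0 : Euc d) 3) ^ 2 ≤ φ x ∧
    φ x ≤ c * Metric.infDist x (sphere (0 : Euc d) 3) ^ 2 ∧
    ‖fderiv ℝ φ x‖ ≤ c * Metric.infDist x (sphere (0 : Euc d) 3)

/-- `φ_B(y) = φ((y − x)/r)` for `B = B(x,r)`. -/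
noncomputable def phiB {d : ℕ} (φ : Euc d → ℝ) (x : Euc d) (r : ℝ) (y : Euc d) : ℝ :=
  φ (r⁻¹ • (y - x))

/-- The quantity inside the infimum defining `α_{μ,p}(x,r)`, for a given plane `L`:
`(1/(r μ(3B)^{1/p})) W_p(φ_B μ, a_{B,L} φ_B H^n|_L)`. -/
noncomputable def alphaPVal {d : ℕ} (n : ℕ) (p : ℝ) (φ : Euc d → ℝ) (μ : Measure (Euc d))
    (x : Euc d) (r : ℝ) (L : AffineSubspace ℝ (Euc d)) : ℝ :=
  (r * (μ (ball x (3 * r))).toReal ^ (1 / p))⁻¹ *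
    Wasserstein p
      (μ.withDensity fun y => ENNReal.ofReal (phiB φ x r y))
      (((μH[(n : ℝ)]).restrict (L : Set (Euc d))).withDensity fun y =>
        ENNReal.ofReal
          (((∫ z, phiB φ x r z ∂μ) /
              ∫ z, phiB φ x r z ∂((μH[(n : ℝ)]).restrict (L : Set (Euc d)))) *
            phiB φ x r y))

/-- The coefficient `α_{μ,p}(x,r)`: infimum over affine `n`-planes meeting `B(x,r)`. -/
noncomputable def alphaP {d : ℕ} (n : ℕ) (p : ℝ) (φ : Euc d → ℝ) (μ : Measure (Euc d))
    (x : Euc d) (r : ℝ) : ℝ :=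
  sInf { a | ∃ L : AffineSubspace ℝ (Euc d), IsAffinePlane n L ∧
    ((L : Set (Euc d)) ∩ ball x r).Nonempty ∧ a = alphaPVal n p φ μ x r L }

open MeasureTheory Metric Set ENNReal NNReal

noncomputable section

section PhiB

variable {d : ℕ} {φ : Euc d → ℝ} {x : Euc d} {r : ℝ}

lemma IsBumpFn.lipschitz (hφ : IsBumpFn φ) : ∃ K : NNReal, LipschitzWith K φ := hφ.2.1

lemma phiB_continuous (hφ : IsBumpFn φ) : Continuous (phiB φ x r) := by
  obtain ⟨K, hK⟩ := hφ.2.1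
  exact hK.continuous.comp (by fun_prop : Continuous fun y : Euc d => r⁻¹ • (y - x))

lemma phiB_nonneg (hφ : IsBumpFn φ) (y : Euc d) : 0 ≤ phiB φ x r y := (hφ.2.2.1 _).1

lemma phiB_le_one (hφ : IsBumpFn φ) (y : Euc d) : phiB φ x r y ≤ 1 := (hφ.2.2.1 _).2

lemma norm_scaled (hr : 0 < r) (y : Euc d) : ‖r⁻¹ • (y - x)‖ = dist y x / r := by
  rw [norm_smul, norm_inv, Real.norm_eq_abs, abs_of_pos hr, ← dist_eq_norm]
  ring

lemma phiB_eq_one (hφ : IsBumpFn φ) (hr : 0 < r) {y : Euc d} (hy : y ∈ ball x (2 * r)) :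
    phiB φ x r y = 1 := by
  apply hφ.2.2.2.1
  rw [mem_ball, dist_zero_right, norm_scaled hr, div_lt_iff₀ hr]
  rw [mem_ball] at hy
  linarith

lemma phiB_eq_zero (hφ : IsBumpFn φ) (hr : 0 < r) {y : Euc d} (hy : y ∉ ball x (3 * r)) :
    phiB φ x r y = 0 := by
  by_contra h
  have hmem := hφ.2.2.2.2.1 (Function.mem_support.mpr h)
  rw [mem_ball, dist_zero_right, norm_scaled hr, div_lt_iff₀ hr] at hmem
  rw [mem_ball, not_lt] at hy
  linarith

lemma phiB_hasCompactSupport (hφ : IsBumpFn φ) (hr : 0 < r) :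
    HasCompactSupport (phiB φ x r) := by
  apply IsCompact.of_isClosed_subset (isCompact_closedBall x (3 * r)) (isClosed_tsupport _)
  apply closure_minimal _ isClosed_closedBall
  intro y hy
  by_contra hc
  exact hy (phiB_eq_zero hφ hr (fun hb => hc (ball_subset_closedBall hb)))

lemma phiB_mul_eq (hφ : IsBumpFn φ) (hr : 0 < r) {ψ : Euc d → ℝ}
    (hψ : tsupport ψ ⊆ ball x r) (y : Euc d) : phiB φ x r y * ψ y = ψ y := by
  by_cases h : ψ y = 0
  · simp [h]
  · have : y ∈ ball x (2 * r) := by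
      have := hψ (subset_tsupport _ (Function.mem_support.mpr h))
      rw [mem_ball] at this ⊢
      linarith
    rw [phiB_eq_one hφ hr this, one_mul]

end PhiB

end



variable {n : ℕ}

lemma euc_symm_lipschitz (n : ℕ) :
    LipschitzWith ((n : ℝ≥0) ^ ((2:ℝ)⁻¹)) (WithLp.equiv 2 (Fin n → ℝ)).symm := by
  have h := PiLp.antilipschitzWith_ofLp 2 (fun _ : Fin n => ℝ)
  have hc : ((Fintype.card (Fin n) : ℝ≥0) ^ ((1 / (2:ℝ≥0∞)).toReal)) = ((n:ℝ≥0) ^ ((2:ℝ)⁻¹)) := by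
    norm_num
  rw [hc] at h
  apply LipschitzWith.of_dist_le_mul
  intro a b
  have := h.le_mul_dist ((WithLp.equiv 2 (Fin n → ℝ)).symm a) ((WithLp.equiv 2 (Fin n → ℝ)).symm b)
  simpa using this

lemma euc_ball_pos (hn : 1 ≤ n) (ρ : ℝ) (hρ : 0 < ρ) :
    0 < μH[(n : ℝ)] (ball (0 : EuclideanSpace ℝ (Fin n)) ρ) := by
  classical
  set e := WithLp.equiv 2 (Fin n → ℝ) with he
  set c : ℝ≥0 := (n : ℝ≥0) ^ ((2:ℝ)⁻¹) with hcdef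
  have hnpos : (0:ℝ≥0) < (n:ℝ≥0) := by exact_mod_cast Nat.pos_of_ne_zero (by omega)
  have hcpos : 0 < c := NNReal.rpow_pos hnpos
  have hu : (⇑e.symm '' ball 0 (ρ / c)) ⊆ ball (0 : EuclideanSpace ℝ (Fin n)) ρ := by
    rintro - ⟨y, hy, rfl⟩
    have h2 := (euc_symm_lipschitz n).dist_le_mul y 0
    rw [mem_ball, dist_zero_right] at hy
    rw [mem_ball]
    have he0 : e.symm (0 : Fin n → ℝ) = 0 := rfl
    calc dist (e.symm y) 0 = dist (e.symm y) (e.symm 0) := by rw [he0]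
    _ ≤ c * dist y 0 := h2
    _ < c * (ρ / c) := by
        apply mul_lt_mul_of_pos_left _ (by exact_mod_cast hcpos)
        simpa [dist_zero_right] using hy
    _ = ρ := by field_simp
  have hvol : (0:ℝ≥0∞) < volume (ball (0 : Fin n → ℝ) (ρ / c)) := by
    apply measure_ball_pos
    positivity
  have h1 : μH[(n : ℝ)] (ball (0 : Fin n → ℝ) (ρ / c))
      ≤ μH[(n : ℝ)] (⇑e.symm '' ball 0 (ρ / c)) := by
    have h2 := (show LipschitzWith 1 ⇑(WithLp.equiv 2 (Fin n → ℝ)) from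
      PiLp.lipschitzWith_ofLp 2 (fun _ : Fin n => ℝ)).hausdorffMeasure_image_le
      (d := (n:ℝ)) (by positivity) (⇑e.symm '' ball 0 (ρ / c))
    have him : ⇑e '' (⇑e.symm '' ball 0 (ρ / c)) = ball (0 : Fin n → ℝ) (ρ / c) := by
      rw [Set.image_image]; simp
    rw [him] at h2
    simpa using h2
  have hpi : (μH[(n : ℝ)] : Measure (Fin n → ℝ)) = volume := by
    have := hausdorffMeasure_pi_real (ι := Fin n)
    simpa [Fintype.card_fin] using this
  calc (0:ℝ≥0∞) < volume (ball (0 : Fin n → ℝ) (ρ / c)) := hvol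
  _ = μH[(n : ℝ)] (ball (0 : Fin n → ℝ) (ρ / c)) := by rw [hpi]
  _ ≤ μH[(n : ℝ)] (⇑e.symm '' ball 0 (ρ / c)) := h1
  _ ≤ μH[(n : ℝ)] (ball (0 : EuclideanSpace ℝ (Fin n)) ρ) := measure_mono hu

lemma euc_ball_lt_top (n : ℕ) (ρ : ℝ) :
    μH[(n : ℝ)] (ball (0 : EuclideanSpace ℝ (Fin n)) ρ) < ∞ := by
  classical
  set e := WithLp.equiv 2 (Fin n → ℝ) with he
  set c : ℝ≥0 := (n : ℝ≥0) ^ ((2:ℝ)⁻¹) with hcdef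
  have hsub : ⇑e '' (ball (0 : EuclideanSpace ℝ (Fin n)) ρ) ⊆ ball (0 : Fin n → ℝ) ρ := by
    rintro - ⟨y, hy, rfl⟩
    rw [mem_ball] at hy ⊢
    have h3 : dist (e y) (e 0) ≤ ↑(1:ℝ≥0) * dist y 0 :=
      (PiLp.lipschitzWith_ofLp 2 (fun _ : Fin n => ℝ)).dist_le_mul y 0
    rw [NNReal.coe_one, one_mul] at h3
    calc dist (e y) 0 = dist (e y) (e 0) := rfl
    _ ≤ dist y 0 := h3
    _ < ρ := hy
  have h1 : μH[(n : ℝ)] (ball (0 : EuclideanSpace ℝ (Fin n)) ρ)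
      ≤ (c : ℝ≥0∞) ^ (n:ℝ) * μH[(n : ℝ)] (⇑e '' (ball (0 : EuclideanSpace ℝ (Fin n)) ρ)) := by
    have h2 := (euc_symm_lipschitz n).hausdorffMeasure_image_le (d := (n:ℝ)) (by positivity)
      (⇑e '' (ball (0 : EuclideanSpace ℝ (Fin n)) ρ))
    have him : ⇑e.symm '' (⇑e '' (ball (0 : EuclideanSpace ℝ (Fin n)) ρ))
        = ball (0 : EuclideanSpace ℝ (Fin n)) ρ := by
      rw [Set.image_image]; simp
    rwa [him] at h2
  have hpi : (μH[(n : ℝ)] : Measure (Fin n → ℝ)) = volume := by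
    have := hausdorffMeasure_pi_real (ι := Fin n)
    simpa [Fintype.card_fin] using this
  calc μH[(n : ℝ)] (ball (0 : EuclideanSpace ℝ (Fin n)) ρ)
      ≤ (c : ℝ≥0∞) ^ (n:ℝ) * μH[(n : ℝ)] (⇑e '' (ball (0 : EuclideanSpace ℝ (Fin n)) ρ)) := h1
  _ ≤ (c : ℝ≥0∞) ^ (n:ℝ) * μH[(n : ℝ)] (ball (0 : Fin n → ℝ) ρ) := by
      gcongr
  _ = (c : ℝ≥0∞) ^ (n:ℝ) * volume (ball (0 : Fin n → ℝ) ρ) := by rw [hpi]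
  _ < ∞ := by
      apply ENNReal.mul_lt_top
      · exact (ENNReal.rpow_lt_top_of_nonneg (by positivity) coe_ne_top)
      · exact measure_ball_lt_top




lemma plane_ball_measure {d n : ℕ} (L : AffineSubspace ℝ (Euc d))
    (hL : Module.finrank ℝ L.direction = n) {y₀ : Euc d} (hy₀ : y₀ ∈ L) (ρ : ℝ) :
    μH[(n:ℝ)] ((L : Set (Euc d)) ∩ ball y₀ ρ)
      = μH[(n:ℝ)] (ball (0 : EuclideanSpace ℝ (Fin n)) ρ) := by
  classical
  set V := L.direction
  let e : EuclideanSpace ℝ (Fin n) ≃ₗᵢ[ℝ] V :=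
    ((stdOrthonormalBasis ℝ V).repr.trans
      (LinearIsometryEquiv.piLpCongrLeft 2 ℝ ℝ (finCongr hL))).symm
  set f : EuclideanSpace ℝ (Fin n) → Euc d := fun v => y₀ + (e v : Euc d) with hf
  have hiso : Isometry f := by
    apply Isometry.of_dist_eq
    intro u v
    have : dist (f u) (f v) = ‖(e u : Euc d) - (e v : Euc d)‖ := by
      rw [hf]; simp [dist_eq_norm]
    rw [this, ← Submodule.coe_sub, Submodule.norm_coe, ← dist_eq_norm, e.dist_map]
  have him : f '' (ball (0 : EuclideanSpace ℝ (Fin n)) ρ) = (L : Set (Euc d)) ∩ ball y₀ ρ := by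
    ext z
    constructor
    · rintro ⟨v, hv, rfl⟩
      rw [mem_ball, dist_zero_right] at hv
      constructor
      · have : (e v : Euc d) ∈ L.direction := SetLike.coe_mem _
        have := AffineSubspace.vadd_mem_of_mem_direction this hy₀
        simpa [hf, vadd_eq_add, add_comm] using this
      · rw [mem_ball, hf]
        simp only [dist_eq_norm, add_sub_cancel_left]
        calc ‖((e v : V) : Euc d)‖ = ‖e v‖ := Submodule.norm_coe _
        _ = ‖v‖ := e.norm_map v
        _ < ρ := hv
    · rintro ⟨hzL, hzb⟩
      have hw : z - y₀ ∈ L.direction := by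
        have := AffineSubspace.vsub_mem_direction hzL hy₀
        simpa [vsub_eq_sub] using this
      refine ⟨e.symm ⟨z - y₀, hw⟩, ?_, ?_⟩
      · rw [mem_ball, dist_zero_right, e.symm.norm_map]
        rw [mem_ball, dist_eq_norm] at hzb
        simpa using hzb
      · rw [hf]
        simp
  rw [← him, hiso.hausdorffMeasure_image (Or.inl (by positivity))]


section Measures

variable {d n : ℕ} {φ : Euc d → ℝ} {x : Euc d} {r : ℝ} {μ : Measure (Euc d)}

lemma lintegral_phiB_restrict_pos (hφ : IsBumpFn φ) (hr : 0 < r) (hn : 1 ≤ n)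
    {L : AffineSubspace ℝ (Euc d)} (hL : Module.finrank ℝ L.direction = n)
    (hLb : ((L : Set (Euc d)) ∩ ball x r).Nonempty) :
    0 < ∫⁻ y, ENNReal.ofReal (phiB φ x r y) ∂((μH[(n : ℝ)]).restrict (L : Set (Euc d))) := by
  obtain ⟨y₀, hy₀L, hy₀b⟩ := hLb
  calc (0:ℝ≥0∞) < μH[(n:ℝ)] (ball (0 : EuclideanSpace ℝ (Fin n)) r) := euc_ball_pos hn r hr
  _ = μH[(n:ℝ)] ((L : Set (Euc d)) ∩ ball y₀ r) := (plane_ball_measure L hL hy₀L r).symm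
  _ ≤ μH[(n:ℝ)] (ball x (2 * r) ∩ (L : Set (Euc d))) := by
      apply measure_mono
      rintro z ⟨hzL, hzb⟩
      rw [mem_ball] at hzb hy₀b
      exact ⟨by rw [mem_ball]; calc dist z x ≤ dist z y₀ + dist y₀ x := dist_triangle _ _ _
        _ < 2 * r := by linarith, hzL⟩
  _ = ((μH[(n : ℝ)]).restrict (L : Set (Euc d))) (ball x (2 * r)) :=
      (Measure.restrict_apply measurableSet_ball).symm
  _ = ∫⁻ y, (ball x (2*r)).indicator (1 : Euc d → ℝ≥0∞) y
        ∂((μH[(n : ℝ)]).restrict (L : Set (Euc d))) := by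
      rw [lintegral_indicator_one measurableSet_ball]
  _ ≤ ∫⁻ y, ENNReal.ofReal (phiB φ x r y) ∂((μH[(n : ℝ)]).restrict (L : Set (Euc d))) := by
      apply lintegral_mono
      intro y
      by_cases hy : y ∈ ball x (2*r)
      · rw [indicator_of_mem hy]
        show (1:ℝ≥0∞) ≤ ENNReal.ofReal (phiB φ x r y)
        rw [phiB_eq_one hφ hr hy]
        simp
      · rw [indicator_of_notMem hy]
        exact zero_le

lemma ofReal_phiB_le_indicator (hφ : IsBumpFn φ) (hr : 0 < r) (y : Euc d) :
    ENNReal.ofReal (phiB φ x r y) ≤ (ball x (3*r)).indicator (1 : Euc d → ℝ≥0∞) y := by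
  by_cases hy : y ∈ ball x (3*r)
  · rw [indicator_of_mem hy]
    exact ofReal_le_one.mpr (phiB_le_one hφ y)
  · rw [indicator_of_notMem hy, phiB_eq_zero hφ hr hy]
    simp

lemma lintegral_phiB_restrict_lt_top (hφ : IsBumpFn φ) (hr : 0 < r)
    {L : AffineSubspace ℝ (Euc d)} (hL : Module.finrank ℝ L.direction = n)
    (hLb : ((L : Set (Euc d)) ∩ ball x r).Nonempty) :
    ∫⁻ y, ENNReal.ofReal (phiB φ x r y) ∂((μH[(n : ℝ)]).restrict (L : Set (Euc d))) < ∞ := by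
  obtain ⟨y₀, hy₀L, hy₀b⟩ := hLb
  calc ∫⁻ y, ENNReal.ofReal (phiB φ x r y) ∂((μH[(n : ℝ)]).restrict (L : Set (Euc d)))
      ≤ ∫⁻ y, (ball x (3*r)).indicator (1 : Euc d → ℝ≥0∞) y
        ∂((μH[(n : ℝ)]).restrict (L : Set (Euc d))) :=
      lintegral_mono (ofReal_phiB_le_indicator hφ hr)
  _ = ((μH[(n : ℝ)]).restrict (L : Set (Euc d))) (ball x (3*r)) :=
      lintegral_indicator_one measurableSet_ball
  _ = μH[(n:ℝ)] (ball x (3*r) ∩ (L : Set (Euc d))) := Measure.restrict_apply measurableSet_ball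
  _ ≤ μH[(n:ℝ)] ((L : Set (Euc d)) ∩ ball y₀ (4*r)) := by
      apply measure_mono
      rintro z ⟨hzb, hzL⟩
      rw [mem_ball] at hzb hy₀b
      exact ⟨hzL, by rw [mem_ball]; calc dist z y₀ ≤ dist z x + dist x y₀ := dist_triangle _ _ _
        _ < 4 * r := by rw [dist_comm] at hy₀b; linarith⟩
  _ = μH[(n:ℝ)] (ball (0 : EuclideanSpace ℝ (Fin n)) (4*r)) := plane_ball_measure L hL hy₀L _
  _ < ∞ := euc_ball_lt_top n _

lemma lintegral_phiB_mu_pos (hφ : IsBumpFn φ) (hr : 0 < r)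
    (hB : (ball x r ∩ measureSupport μ).Nonempty) :
    0 < ∫⁻ y, ENNReal.ofReal (phiB φ x r y) ∂μ := by
  obtain ⟨y', hy'b, hy's⟩ := hB
  rw [mem_ball] at hy'b
  have hρ : 0 < r - dist y' x := by linarith
  calc (0:ℝ≥0∞) < μ (ball y' (r - dist y' x)) := hy's _ hρ
  _ = ∫⁻ y, (ball y' (r - dist y' x)).indicator (1 : Euc d → ℝ≥0∞) y ∂μ :=
      (lintegral_indicator_one measurableSet_ball).symm
  _ ≤ ∫⁻ y, ENNReal.ofReal (phiB φ x r y) ∂μ := by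
      apply lintegral_mono
      intro y
      by_cases hy : y ∈ ball y' (r - dist y' x)
      · rw [indicator_of_mem hy]
        have : y ∈ ball x (2 * r) := by
          rw [mem_ball] at hy ⊢
          calc dist y x ≤ dist y y' + dist y' x := dist_triangle _ _ _
          _ < 2 * r := by linarith
        show (1:ℝ≥0∞) ≤ ENNReal.ofReal (phiB φ x r y)
        rw [phiB_eq_one hφ hr this]
        simp
      · rw [indicator_of_notMem hy]
        exact zero_le

lemma lintegral_phiB_mu_le (hφ : IsBumpFn φ) (hr : 0 < r) :
    ∫⁻ y, ENNReal.ofReal (phiB φ x r y) ∂μ ≤ μ (ball x (3*r)) := by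
  calc ∫⁻ y, ENNReal.ofReal (phiB φ x r y) ∂μ
      ≤ ∫⁻ y, (ball x (3*r)).indicator (1 : Euc d → ℝ≥0∞) y ∂μ :=
      lintegral_mono (ofReal_phiB_le_indicator hφ hr)
  _ = μ (ball x (3*r)) := lintegral_indicator_one measurableSet_ball

lemma integrable_phiB (hφ : IsBumpFn φ) (ν : Measure (Euc d))
    (h : ∫⁻ y, ENNReal.ofReal (phiB φ x r y) ∂ν < ∞) : Integrable (phiB φ x r) ν :=
  ⟨(phiB_continuous hφ).aestronglyMeasurable,
    (hasFiniteIntegral_iff_ofReal (ae_of_all _ (phiB_nonneg hφ))).2 h⟩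

lemma ofReal_integral_phiB (hφ : IsBumpFn φ) (ν : Measure (Euc d))
    (h : ∫⁻ y, ENNReal.ofReal (phiB φ x r y) ∂ν < ∞) :
    ENNReal.ofReal (∫ y, phiB φ x r y ∂ν) = ∫⁻ y, ENNReal.ofReal (phiB φ x r y) ∂ν :=
  ofReal_integral_eq_lintegral_ofReal (integrable_phiB hφ ν h) (ae_of_all _ (phiB_nonneg hφ))

end Measures

section Plan

variable {d n : ℕ} {φ : Euc d → ℝ} {x : Euc d} {r : ℝ} {μ : Measure (Euc d)}
  {L : AffineSubspace ℝ (Euc d)}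

lemma withDensity_univ (ν : Measure (Euc d)) (f : Euc d → ℝ≥0∞) :
    ν.withDensity f univ = ∫⁻ y, f y ∂ν := by
  rw [withDensity_apply _ MeasurableSet.univ, Measure.restrict_univ]

lemma nu_univ_eq (hφ : IsBumpFn φ) (hr : 0 < r) (hn : 1 ≤ n)
    [IsLocallyFiniteMeasure μ]
    (hL : Module.finrank ℝ L.direction = n)
    (hLb : ((L : Set (Euc d)) ∩ ball x r).Nonempty) :
    (((μH[(n : ℝ)]).restrict (L : Set (Euc d))).withDensity fun y =>
        ENNReal.ofReal
          (((∫ z, phiB φ x r z ∂μ) /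
              ∫ z, phiB φ x r z ∂((μH[(n : ℝ)]).restrict (L : Set (Euc d)))) *
            phiB φ x r y)) univ
      = (μ.withDensity fun y => ENNReal.ofReal (phiB φ x r y)) univ := by
  set HL := (μH[(n : ℝ)]).restrict (L : Set (Euc d)) with hHL
  have hJpos := lintegral_phiB_restrict_pos (φ := φ) hφ hr hn hL hLb
  have hJlt := lintegral_phiB_restrict_lt_top (φ := φ) hφ hr hL hLb
  rw [← hHL] at hJpos hJlt
  have hIH : ENNReal.ofReal (∫ z, phiB φ x r z ∂HL) = ∫⁻ y, ENNReal.ofReal (phiB φ x r y) ∂HL :=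
    ofReal_integral_phiB hφ HL hJlt
  have hIHpos : 0 < ∫ z, phiB φ x r z ∂HL := by
    have := integral_nonneg (f := phiB φ x r) (fun y => phiB_nonneg hφ (x := x) (r := r) y) (μ := HL)
    rcases this.lt_or_eq with h | h
    · exact h
    · exfalso
      rw [← h] at hIH
      simp only [ofReal_zero] at hIH
      exact hJpos.ne' hIH.symm
  set aB := (∫ z, phiB φ x r z ∂μ) / ∫ z, phiB φ x r z ∂HL with haB
  have hμnn : 0 ≤ ∫ z, phiB φ x r z ∂μ := integral_nonneg (fun y => phiB_nonneg hφ y)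
  have haBnn : 0 ≤ aB := div_nonneg hμnn hIHpos.le
  rw [withDensity_univ, withDensity_univ]
  have hsplit : ∀ y, ENNReal.ofReal (aB * phiB φ x r y)
      = ENNReal.ofReal aB * ENNReal.ofReal (phiB φ x r y) := fun y => ENNReal.ofReal_mul haBnn
  calc ∫⁻ y, ENNReal.ofReal (aB * phiB φ x r y) ∂HL
      = ∫⁻ y, ENNReal.ofReal aB * ENNReal.ofReal (phiB φ x r y) ∂HL := by
        simp only [hsplit]
  _ = ENNReal.ofReal aB * ∫⁻ y, ENNReal.ofReal (phiB φ x r y) ∂HL := by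
        rw [lintegral_const_mul _ ((phiB_continuous hφ).measurable.ennreal_ofReal)]
  _ = ENNReal.ofReal aB * ENNReal.ofReal (∫ z, phiB φ x r z ∂HL) := by rw [hIH]
  _ = ENNReal.ofReal (aB * ∫ z, phiB φ x r z ∂HL) := (ENNReal.ofReal_mul haBnn).symm
  _ = ENNReal.ofReal (∫ z, phiB φ x r z ∂μ) := by
        rw [haB, div_mul_cancel₀ _ hIHpos.ne']
  _ = ∫⁻ y, ENNReal.ofReal (phiB φ x r y) ∂μ := by
        apply ofReal_integral_phiB hφ μ
        exact lt_of_le_of_lt (lintegral_phiB_mu_le hφ hr) measure_ball_lt_top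

lemma plan_exists (hφ : IsBumpFn φ) (hr : 0 < r) (hn : 1 ≤ n)
    [IsLocallyFiniteMeasure μ]
    (hL : Module.finrank ℝ L.direction = n)
    (hLb : ((L : Set (Euc d)) ∩ ball x r).Nonempty)
    (hB : (ball x r ∩ measureSupport μ).Nonempty) :
    ∃ π : Measure (Euc d × Euc d),
      π.map Prod.fst = (μ.withDensity fun y => ENNReal.ofReal (phiB φ x r y)) ∧
      π.map Prod.snd = (((μH[(n : ℝ)]).restrict (L : Set (Euc d))).withDensity fun y =>
        ENNReal.ofReal
          (((∫ z, phiB φ x r z ∂μ) /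
              ∫ z, phiB φ x r z ∂((μH[(n : ℝ)]).restrict (L : Set (Euc d)))) *
            phiB φ x r y)) := by
  set σ := μ.withDensity fun y => ENNReal.ofReal (phiB φ x r y) with hσ
  set ν := (((μH[(n : ℝ)]).restrict (L : Set (Euc d))).withDensity fun y =>
        ENNReal.ofReal
          (((∫ z, phiB φ x r z ∂μ) /
              ∫ z, phiB φ x r z ∂((μH[(n : ℝ)]).restrict (L : Set (Euc d)))) *
            phiB φ x r y)) with hν
  have hmass : ν univ = σ univ := nu_univ_eq hφ hr hn hL hLb
  have hσuniv : σ univ = ∫⁻ y, ENNReal.ofReal (phiB φ x r y) ∂μ := withDensity_univ _ _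
  have hσpos : 0 < σ univ := by rw [hσuniv]; exact lintegral_phiB_mu_pos hφ hr hB
  have hσlt : σ univ < ∞ := by
    rw [hσuniv]; exact lt_of_le_of_lt (lintegral_phiB_mu_le hφ hr) measure_ball_lt_top
  haveI : IsFiniteMeasure σ := ⟨hσlt⟩
  haveI : IsFiniteMeasure ν := ⟨by rw [hmass]; exact hσlt⟩
  refine ⟨(σ univ)⁻¹ • σ.prod ν, ?_, ?_⟩
  · rw [Measure.map_smul, Measure.map_fst_prod, hmass, smul_smul,
      ENNReal.inv_mul_cancel hσpos.ne' hσlt.ne, one_smul]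
  · rw [Measure.map_smul, Measure.map_snd_prod, smul_smul,
      ENNReal.inv_mul_cancel hσpos.ne' hσlt.ne, one_smul]

end Plan

section Duality

variable {d n : ℕ} {φ : Euc d → ℝ} {x : Euc d} {r : ℝ} {μ : Measure (Euc d)}
  {L : AffineSubspace ℝ (Euc d)}

lemma Fdist_le_plan (hφ : IsBumpFn φ) (hr : 0 < r) [IsLocallyFiniteMeasure μ]
    {π : Measure (Euc d × Euc d)}
    (hfst : π.map Prod.fst = (μ.withDensity fun y => ENNReal.ofReal (phiB φ x r y)))
    (hsnd : π.map Prod.snd = (((μH[(n : ℝ)]).restrict (L : Set (Euc d))).withDensity fun y =>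
        ENNReal.ofReal
          (((∫ z, phiB φ x r z ∂μ) /
              ∫ z, phiB φ x r z ∂((μH[(n : ℝ)]).restrict (L : Set (Euc d)))) *
            phiB φ x r y))) :
    Fdist (ball x r) μ (flatMeasure n
      ((∫ z, phiB φ x r z ∂μ) /
        ∫ z, phiB φ x r z ∂((μH[(n : ℝ)]).restrict (L : Set (Euc d)))) L)
      ≤ ∫ z, dist z.1 z.2 ∂π := by
  set HL := (μH[(n : ℝ)]).restrict (L : Set (Euc d)) with hHL
  set aB := (∫ z, phiB φ x r z ∂μ) / ∫ z, phiB φ x r z ∂HL with haB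
  set σ := μ.withDensity fun y => ENNReal.ofReal (phiB φ x r y) with hσ
  set ν := HL.withDensity fun y => ENNReal.ofReal (aB * phiB φ x r y) with hν
  have haBnn : 0 ≤ aB :=
    div_nonneg (integral_nonneg fun y => phiB_nonneg hφ y)
      (integral_nonneg fun y => phiB_nonneg hφ y)
  have hπuniv : π univ = σ univ := by
    rw [← hfst, Measure.map_apply measurable_fst MeasurableSet.univ, preimage_univ]
  haveI : IsFiniteMeasure π := ⟨by
    rw [hπuniv, withDensity_univ]
    exact lt_of_le_of_lt (lintegral_phiB_mu_le hφ hr) measure_ball_lt_top⟩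
  -- a.e. bound on distance
  have hσc : σ (closedBall x (3*r))ᶜ = 0 := by
    rw [hσ, withDensity_apply _ measurableSet_closedBall.compl]
    rw [setLIntegral_congr_fun_ae measurableSet_closedBall.compl
      (ae_of_all _ (fun y (hy : y ∈ (closedBall x (3*r))ᶜ) => ?_)), lintegral_zero]
    rw [phiB_eq_zero hφ hr (fun hb => hy (ball_subset_closedBall hb))]
    exact ofReal_zero
  have hνc : ν (closedBall x (3*r))ᶜ = 0 := by
    rw [hν, withDensity_apply _ measurableSet_closedBall.compl]
    rw [setLIntegral_congr_fun_ae measurableSet_closedBall.compl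
      (ae_of_all _ (fun y (hy : y ∈ (closedBall x (3*r))ᶜ) => ?_)), lintegral_zero]
    rw [phiB_eq_zero hφ hr (fun hb => hy (ball_subset_closedBall hb)), mul_zero]
    exact ofReal_zero
  have hh1 : ∀ᵐ z ∂π, z.1 ∈ closedBall x (3*r) := by
    rw [ae_iff]
    have : {z : Euc d × Euc d | ¬ z.1 ∈ closedBall x (3*r)}
        = Prod.fst ⁻¹' (closedBall x (3*r))ᶜ := rfl
    rw [this, ← Measure.map_apply measurable_fst measurableSet_closedBall.compl, hfst]
    exact hσc
  have hh2 : ∀ᵐ z ∂π, z.2 ∈ closedBall x (3*r) := by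
    rw [ae_iff]
    have : {z : Euc d × Euc d | ¬ z.2 ∈ closedBall x (3*r)}
        = Prod.snd ⁻¹' (closedBall x (3*r))ᶜ := rfl
    rw [this, ← Measure.map_apply measurable_snd measurableSet_closedBall.compl, hsnd]
    exact hνc
  have hae : ∀ᵐ z ∂π, dist z.1 z.2 ≤ 6 * r := by
    filter_upwards [hh1, hh2] with z hz1 hz2
    rw [mem_closedBall] at hz1 hz2
    calc dist z.1 z.2 ≤ dist z.1 x + dist x z.2 := dist_triangle _ _ _
    _ ≤ 3*r + 3*r := by rw [dist_comm x z.2]; exact add_le_add hz1 hz2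
    _ = 6 * r := by ring
  have hdist_int : Integrable (fun z : Euc d × Euc d => dist z.1 z.2) π := by
    apply (integrable_const (6*r)).mono'
      ((continuous_fst.dist continuous_snd).aestronglyMeasurable)
    filter_upwards [hae] with z hz
    rwa [Real.norm_eq_abs, abs_of_nonneg dist_nonneg]
  apply Real.sSup_le _ (integral_nonneg fun z => dist_nonneg)
  rintro t ⟨ψ, ⟨hψlip, hψsupp⟩, rfl⟩
  have hψcont : Continuous ψ := hψlip.continuous
  have hψcs : HasCompactSupport ψ :=
    IsCompact.of_isClosed_subset (isCompact_closedBall x r) (isClosed_tsupport ψ)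
      (hψsupp.trans ball_subset_closedBall)
  obtain ⟨C, hC⟩ := hψcs.exists_bound_of_continuous hψcont
  have hmeasphiB : Measurable fun y => Real.toNNReal (phiB φ x r y) :=
    measurable_real_toNNReal.comp (phiB_continuous hφ).measurable
  have hkey1 : ∫ y, ψ y ∂μ = ∫ y, ψ y ∂σ := by
    have h0 : ∫ y, ψ y ∂σ = ∫ y, Real.toNNReal (phiB φ x r y) • ψ y ∂μ := by
      rw [hσ, show (fun y => ENNReal.ofReal (phiB φ x r y))
          = (fun y => (((fun z => Real.toNNReal (phiB φ x r z)) y : ℝ≥0) : ℝ≥0∞)) from rfl]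
      exact integral_withDensity_eq_integral_smul hmeasphiB ψ
    rw [h0]
    apply integral_congr_ae
    apply ae_of_all
    intro y
    show ψ y = Real.toNNReal (phiB φ x r y) • ψ y
    rw [NNReal.smul_def, Real.coe_toNNReal _ (phiB_nonneg hφ y), smul_eq_mul,
      phiB_mul_eq hφ hr hψsupp y]
  have hmeasaB : Measurable fun y => Real.toNNReal (aB * phiB φ x r y) :=
    measurable_real_toNNReal.comp ((continuous_const.mul (phiB_continuous hφ)).measurable)
  have hkey2 : ∫ y, ψ y ∂(flatMeasure n aB L) = ∫ y, ψ y ∂ν := by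
    have h1 : ∫ y, ψ y ∂ν = ∫ y, Real.toNNReal (aB * phiB φ x r y) • ψ y ∂HL := by
      rw [hν, show (fun y => ENNReal.ofReal (aB * phiB φ x r y))
          = (fun y => (((fun z => Real.toNNReal (aB * phiB φ x r z)) y : ℝ≥0) : ℝ≥0∞)) from rfl]
      exact integral_withDensity_eq_integral_smul hmeasaB ψ
    have h1' : ∫ y, Real.toNNReal (aB * phiB φ x r y) • ψ y ∂HL = aB * ∫ y, ψ y ∂HL := by
      rw [← integral_const_mul]
      apply integral_congr_ae
      apply ae_of_all
      intro y
      show Real.toNNReal (aB * phiB φ x r y) • ψ y = aB * ψ y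
      rw [NNReal.smul_def, Real.coe_toNNReal _ (mul_nonneg haBnn (phiB_nonneg hφ y)),
        smul_eq_mul, mul_assoc, phiB_mul_eq hφ hr hψsupp y]
    have h2 : ∫ y, ψ y ∂(flatMeasure n aB L) = aB * ∫ y, ψ y ∂HL := by
      show ∫ y, ψ y ∂(ENNReal.ofReal aB • ((μH[(n : ℝ)]).restrict (L : Set (Euc d)))) = _
      rw [integral_smul_measure, ENNReal.toReal_ofReal haBnn, smul_eq_mul]
    rw [h2, h1, h1']
  have hmap1 : ∫ y, ψ y ∂σ = ∫ z : Euc d × Euc d, ψ z.1 ∂π := by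
    rw [← hfst, integral_map measurable_fst.aemeasurable hψcont.aestronglyMeasurable]
  have hmap2 : ∫ y, ψ y ∂ν = ∫ z : Euc d × Euc d, ψ z.2 ∂π := by
    rw [← hsnd, integral_map measurable_snd.aemeasurable hψcont.aestronglyMeasurable]
  have hint1 : Integrable (fun z : Euc d × Euc d => ψ z.1) π :=
    (integrable_const C).mono' ((hψcont.comp continuous_fst).aestronglyMeasurable)
      (ae_of_all _ fun z => hC _)
  have hint2 : Integrable (fun z : Euc d × Euc d => ψ z.2) π :=
    (integrable_const C).mono' ((hψcont.comp continuous_snd).aestronglyMeasurable)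
      (ae_of_all _ fun z => hC _)
  calc |(∫ y, ψ y ∂μ) - ∫ y, ψ y ∂(flatMeasure n aB L)|
      = |∫ z : Euc d × Euc d, (ψ z.1 - ψ z.2) ∂π| := by
        rw [hkey1, hkey2, hmap1, hmap2, ← integral_sub hint1 hint2]
  _ ≤ ∫ z : Euc d × Euc d, |ψ z.1 - ψ z.2| ∂π := by
        simpa [Real.norm_eq_abs] using
          norm_integral_le_integral_norm (μ := π) (fun z : Euc d × Euc d => ψ z.1 - ψ z.2)
  _ ≤ ∫ z : Euc d × Euc d, dist z.1 z.2 ∂π := by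
        apply integral_mono_ae (hint1.sub hint2).abs hdist_int
        apply ae_of_all
        intro z
        have h := hψlip.dist_le_mul z.1 z.2
        rw [Real.dist_eq] at h
        simpa using h

end Duality

section Compare

variable {d n : ℕ} {φ : Euc d → ℝ} {x : Euc d} {r : ℝ} {μ : Measure (Euc d)}
  {L : AffineSubspace ℝ (Euc d)}

lemma Wasserstein_nonneg (p : ℝ) (σ ν : Measure (Euc d)) : 0 ≤ Wasserstein p σ ν := by
  apply Real.sInf_nonneg
  rintro w ⟨π, -, -, rfl⟩
  exact Real.rpow_nonneg (integral_nonneg fun z => Real.rpow_nonneg dist_nonneg _) _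

lemma Fdist_nonneg (B : Set (Euc d)) (μ ν : Measure (Euc d)) : 0 ≤ Fdist B μ ν := by
  apply Real.sSup_nonneg
  rintro t ⟨ψ, -, rfl⟩
  exact abs_nonneg _

lemma alphaVal_nonneg (hr : 0 < r) (c : ℝ) (L : AffineSubspace ℝ (Euc d)) :
    0 ≤ alphaVal n μ x r c L :=
  div_nonneg (Fdist_nonneg _ _ _) (mul_nonneg hr.le ENNReal.toReal_nonneg)

lemma alphaPVal_nonneg (hr : 0 < r) (p : ℝ) (L : AffineSubspace ℝ (Euc d)) :
    0 ≤ alphaPVal n p φ μ x r L :=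
  mul_nonneg (inv_nonneg.2 (mul_nonneg hr.le (Real.rpow_nonneg ENNReal.toReal_nonneg _)))
    (Wasserstein_nonneg _ _ _)

/-- For any transport plan between the two weighted measures, the plan is finite and
almost every pair is within distance `6r`. -/
lemma plan_facts (hφ : IsBumpFn φ) (hr : 0 < r) [IsLocallyFiniteMeasure μ]
    {π : Measure (Euc d × Euc d)}
    (hfst : π.map Prod.fst = (μ.withDensity fun y => ENNReal.ofReal (phiB φ x r y)))
    (hsnd : π.map Prod.snd = (((μH[(n : ℝ)]).restrict (L : Set (Euc d))).withDensity fun y =>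
        ENNReal.ofReal
          (((∫ z, phiB φ x r z ∂μ) /
              ∫ z, phiB φ x r z ∂((μH[(n : ℝ)]).restrict (L : Set (Euc d)))) *
            phiB φ x r y))) :
    π univ ≤ μ (ball x (3*r)) ∧ (∀ᵐ z ∂π, dist z.1 z.2 ≤ 6 * r) := by
  have hπuniv : π univ
      = (μ.withDensity fun y => ENNReal.ofReal (phiB φ x r y)) univ := by
    rw [← hfst, Measure.map_apply measurable_fst MeasurableSet.univ, preimage_univ]
  constructor
  · rw [hπuniv, withDensity_univ]
    exact lintegral_phiB_mu_le hφ hr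
  · have hσc : (μ.withDensity fun y => ENNReal.ofReal (phiB φ x r y))
        (closedBall x (3*r))ᶜ = 0 := by
      rw [withDensity_apply _ measurableSet_closedBall.compl]
      rw [setLIntegral_congr_fun_ae measurableSet_closedBall.compl
        (ae_of_all _ (fun y (hy : y ∈ (closedBall x (3*r))ᶜ) => ?_)), lintegral_zero]
      rw [phiB_eq_zero hφ hr (fun hb => hy (ball_subset_closedBall hb))]
      exact ENNReal.ofReal_zero
    have hνc : (((μH[(n : ℝ)]).restrict (L : Set (Euc d))).withDensity fun y =>
        ENNReal.ofReal
          (((∫ z, phiB φ x r z ∂μ) /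
              ∫ z, phiB φ x r z ∂((μH[(n : ℝ)]).restrict (L : Set (Euc d)))) *
            phiB φ x r y)) (closedBall x (3*r))ᶜ = 0 := by
      rw [withDensity_apply _ measurableSet_closedBall.compl]
      rw [setLIntegral_congr_fun_ae measurableSet_closedBall.compl
        (ae_of_all _ (fun y (hy : y ∈ (closedBall x (3*r))ᶜ) => ?_)), lintegral_zero]
      rw [phiB_eq_zero hφ hr (fun hb => hy (ball_subset_closedBall hb)), mul_zero]
      exact ENNReal.ofReal_zero
    have hh1 : ∀ᵐ z ∂π, z.1 ∈ closedBall x (3*r) := by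
      rw [ae_iff]
      have he : {z : Euc d × Euc d | ¬ z.1 ∈ closedBall x (3*r)}
          = Prod.fst ⁻¹' (closedBall x (3*r))ᶜ := rfl
      rw [he, ← Measure.map_apply measurable_fst measurableSet_closedBall.compl, hfst]
      exact hσc
    have hh2 : ∀ᵐ z ∂π, z.2 ∈ closedBall x (3*r) := by
      rw [ae_iff]
      have he : {z : Euc d × Euc d | ¬ z.2 ∈ closedBall x (3*r)}
          = Prod.snd ⁻¹' (closedBall x (3*r))ᶜ := rfl
      rw [he, ← Measure.map_apply measurable_snd measurableSet_closedBall.compl, hsnd]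
      exact hνc
    filter_upwards [hh1, hh2] with z hz1 hz2
    rw [mem_closedBall] at hz1 hz2
    calc dist z.1 z.2 ≤ dist z.1 x + dist x z.2 := dist_triangle _ _ _
    _ ≤ 3*r + 3*r := by rw [dist_comm x z.2]; exact add_le_add hz1 hz2
    _ = 6 * r := by ring

lemma alphaPVal_one_le_two (hφ : IsBumpFn φ) (hr : 0 < r) [IsLocallyFiniteMeasure μ]
    (L : AffineSubspace ℝ (Euc d)) :
    alphaPVal n 1 φ μ x r L ≤ alphaPVal n 2 φ μ x r L := by
  set σ := μ.withDensity fun y => ENNReal.ofReal (phiB φ x r y) with hσdef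
  set ν := (((μH[(n : ℝ)]).restrict (L : Set (Euc d))).withDensity fun y =>
        ENNReal.ofReal
          (((∫ z, phiB φ x r z ∂μ) /
              ∫ z, phiB φ x r z ∂((μH[(n : ℝ)]).restrict (L : Set (Euc d)))) *
            phiB φ x r y)) with hνdef
  set M := (μ (ball x (3 * r))).toReal with hM
  have hMnn : 0 ≤ M := ENNReal.toReal_nonneg
  show (r * M ^ ((1:ℝ) / 1))⁻¹ * Wasserstein 1 σ ν
      ≤ (r * M ^ ((1:ℝ) / 2))⁻¹ * Wasserstein 2 σ ν
  have hone : M ^ ((1:ℝ) / 1) = M := by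
    rw [show (1:ℝ)/1 = 1 by norm_num, Real.rpow_one]
  rw [hone]
  have hW2nn : 0 ≤ Wasserstein 2 σ ν := Wasserstein_nonneg _ _ _
  rcases eq_or_lt_of_le hMnn with hM0 | hMpos
  · rw [← hM0]
    rw [Real.zero_rpow (by norm_num : (1:ℝ)/2 ≠ 0)]
    simp
  -- main case
  set h2 := M ^ ((1:ℝ) / 2) with hh2def
  have hh2pos : 0 < h2 := Real.rpow_pos_of_pos hMpos _
  have hMsplit : h2 * h2 = M := by
    rw [hh2def, ← Real.rpow_add hMpos]
    norm_num
  have hkey : Wasserstein 1 σ ν ≤ h2 * Wasserstein 2 σ ν := by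
    by_cases hP : ∃ π : Measure (Euc d × Euc d), π.map Prod.fst = σ ∧ π.map Prod.snd = ν
    · have hS1bdd : BddBelow { w | ∃ π : Measure (Euc d × Euc d),
          π.map Prod.fst = σ ∧ π.map Prod.snd = ν ∧
          w = (∫ z, dist z.1 z.2 ^ (1:ℝ) ∂π) ^ (1 / (1:ℝ)) } := by
        refine ⟨0, ?_⟩
        rintro w ⟨π', -, -, rfl⟩
        exact Real.rpow_nonneg (integral_nonneg fun z => Real.rpow_nonneg dist_nonneg _) _
      have hS2ne : { w | ∃ π : Measure (Euc d × Euc d),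
          π.map Prod.fst = σ ∧ π.map Prod.snd = ν ∧
          w = (∫ z, dist z.1 z.2 ^ (2:ℝ) ∂π) ^ (1 / (2:ℝ)) }.Nonempty := by
        obtain ⟨π₀, h₀1, h₀2⟩ := hP
        exact ⟨_, π₀, h₀1, h₀2, rfl⟩
      have hstep : ∀ w ∈ { w | ∃ π : Measure (Euc d × Euc d),
          π.map Prod.fst = σ ∧ π.map Prod.snd = ν ∧
          w = (∫ z, dist z.1 z.2 ^ (2:ℝ) ∂π) ^ (1 / (2:ℝ)) },
          Wasserstein 1 σ ν ≤ h2 * w := by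
        rintro w ⟨π, hfst, hsnd, rfl⟩
        obtain ⟨hπle, hae⟩ := plan_facts hφ hr hfst hsnd
        have hπuniv : π univ = σ univ := by
          rw [← hfst, Measure.map_apply measurable_fst MeasurableSet.univ, preimage_univ]
        have hπlt : π univ < ∞ :=
          lt_of_le_of_lt hπle measure_ball_lt_top
        have hdistmeas : Measurable (fun z : Euc d × Euc d => dist z.1 z.2) :=
          (continuous_fst.dist continuous_snd).measurable
        set A := ∫⁻ z, ENNReal.ofReal (dist z.1 z.2) ∂π with hA
        set B := ∫⁻ z, ENNReal.ofReal (dist z.1 z.2 ^ (2:ℝ)) ∂π with hB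
        have hBle : B ≤ ENNReal.ofReal ((6*r) ^ (2:ℝ)) * π univ := by
          rw [hB]
          calc ∫⁻ z, ENNReal.ofReal (dist z.1 z.2 ^ (2:ℝ)) ∂π
              ≤ ∫⁻ _, ENNReal.ofReal ((6*r) ^ (2:ℝ)) ∂π := by
                apply lintegral_mono_ae
                filter_upwards [hae] with z hz
                exact ENNReal.ofReal_le_ofReal
                  (Real.rpow_le_rpow dist_nonneg hz (by norm_num))
          _ = ENNReal.ofReal ((6*r) ^ (2:ℝ)) * π univ := by
                rw [lintegral_const]
        have hBlt : B < ∞ :=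
          lt_of_le_of_lt hBle (ENNReal.mul_lt_top ENNReal.ofReal_lt_top hπlt)
        have hHolder : A ≤ B ^ ((1:ℝ)/2) * (π univ) ^ ((1:ℝ)/2) := by
          have hpq : Real.HolderConjugate 2 2 := ⟨by norm_num, by norm_num, by norm_num⟩
          have := ENNReal.lintegral_mul_le_Lp_mul_Lq π hpq
            (hdistmeas.ennreal_ofReal.aemeasurable) aemeasurable_const
            (g := fun _ => (1:ℝ≥0∞))
          simp only [mul_one, ENNReal.one_rpow, lintegral_const, one_mul] at this
          calc A ≤ (∫⁻ z, ENNReal.ofReal (dist z.1 z.2) ^ (2:ℝ) ∂π) ^ ((1:ℝ)/2)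
              * (π univ) ^ ((1:ℝ)/2) := by
                rw [hA]
                simpa using this
          _ = B ^ ((1:ℝ)/2) * (π univ) ^ ((1:ℝ)/2) := by
                rw [hB]
                congr 2
                apply lintegral_congr
                intro z
                rw [ENNReal.ofReal_rpow_of_nonneg dist_nonneg (by norm_num)]
        have hint1 : ∫ z, dist z.1 z.2 ^ (1:ℝ) ∂π = A.toReal := by
          simp only [Real.rpow_one]
          rw [integral_eq_lintegral_of_nonneg_ae (ae_of_all _ fun z => dist_nonneg)
            ((continuous_fst.dist continuous_snd).aestronglyMeasurable)]
        have hint2 : ∫ z, dist z.1 z.2 ^ (2:ℝ) ∂π = B.toReal := by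
          rw [integral_eq_lintegral_of_nonneg_ae
            (ae_of_all _ fun z => Real.rpow_nonneg dist_nonneg _)
            (((continuous_fst.dist continuous_snd).rpow_const
              (fun z => Or.inr (by norm_num))).aestronglyMeasurable)]
        have hW1le : Wasserstein 1 σ ν ≤ (∫ z, dist z.1 z.2 ^ (1:ℝ) ∂π) ^ (1/(1:ℝ)) :=
          csInf_le hS1bdd ⟨π, hfst, hsnd, rfl⟩
        have hfinal : (∫ z, dist z.1 z.2 ^ (1:ℝ) ∂π) ^ (1/(1:ℝ))
            ≤ h2 * (∫ z, dist z.1 z.2 ^ (2:ℝ) ∂π) ^ (1/(2:ℝ)) := by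
          rw [show (1:ℝ)/1 = 1 by norm_num, Real.rpow_one, hint1, hint2]
          have hRHSne : B ^ ((1:ℝ)/2) * (π univ) ^ ((1:ℝ)/2) ≠ ∞ :=
            ENNReal.mul_ne_top
              (ENNReal.rpow_ne_top_of_nonneg (by norm_num) hBlt.ne)
              (ENNReal.rpow_ne_top_of_nonneg (by norm_num) hπlt.ne)
          calc A.toReal ≤ (B ^ ((1:ℝ)/2) * (π univ) ^ ((1:ℝ)/2)).toReal :=
              ENNReal.toReal_mono hRHSne hHolder
          _ = B.toReal ^ ((1:ℝ)/2) * (π univ).toReal ^ ((1:ℝ)/2) := by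
              rw [ENNReal.toReal_mul, ← ENNReal.toReal_rpow, ← ENNReal.toReal_rpow]
          _ ≤ B.toReal ^ ((1:ℝ)/2) * M ^ ((1:ℝ)/2) := by
              apply mul_le_mul_of_nonneg_left _ (Real.rpow_nonneg ENNReal.toReal_nonneg _)
              apply Real.rpow_le_rpow ENNReal.toReal_nonneg _ (by norm_num)
              exact ENNReal.toReal_mono measure_ball_lt_top.ne hπle
          _ = h2 * B.toReal ^ (1/(2:ℝ)) := by
              rw [mul_comm, hh2def]
        exact hW1le.trans hfinal
      have hdiv : Wasserstein 1 σ ν / h2 ≤ Wasserstein 2 σ ν := by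
        apply le_csInf hS2ne
        intro w hw
        rw [div_le_iff₀ hh2pos, mul_comm]
        exact hstep w hw
      calc Wasserstein 1 σ ν = h2 * (Wasserstein 1 σ ν / h2) := by field_simp
      _ ≤ h2 * Wasserstein 2 σ ν := mul_le_mul_of_nonneg_left hdiv hh2pos.le
    · have hempty1 : { w | ∃ π : Measure (Euc d × Euc d),
          π.map Prod.fst = σ ∧ π.map Prod.snd = ν ∧
          w = (∫ z, dist z.1 z.2 ^ (1:ℝ) ∂π) ^ (1 / (1:ℝ)) } = ∅ := by
        rw [Set.eq_empty_iff_forall_notMem]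
        rintro w ⟨π, h1, h2', -⟩
        exact hP ⟨π, h1, h2'⟩
      have hempty2 : { w | ∃ π : Measure (Euc d × Euc d),
          π.map Prod.fst = σ ∧ π.map Prod.snd = ν ∧
          w = (∫ z, dist z.1 z.2 ^ (2:ℝ) ∂π) ^ (1 / (2:ℝ)) } = ∅ := by
        rw [Set.eq_empty_iff_forall_notMem]
        rintro w ⟨π, h1, h2', -⟩
        exact hP ⟨π, h1, h2'⟩
      show sInf _ ≤ h2 * sInf _
      rw [hempty1, hempty2, Real.sInf_empty, mul_zero]
  have hfact : (r * M)⁻¹ * (h2 * Wasserstein 2 σ ν) = (r * h2)⁻¹ * Wasserstein 2 σ ν := by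
    rw [← hMsplit]
    rw [show r * (h2 * h2) = (r * h2) * h2 by ring, mul_inv]
    rw [show (r * h2)⁻¹ * h2⁻¹ * (h2 * Wasserstein 2 σ ν)
        = (r * h2)⁻¹ * (h2⁻¹ * h2) * Wasserstein 2 σ ν by ring]
    rw [inv_mul_cancel₀ hh2pos.ne', mul_one]
  calc (r * M)⁻¹ * Wasserstein 1 σ ν
      ≤ (r * M)⁻¹ * (h2 * Wasserstein 2 σ ν) :=
        mul_le_mul_of_nonneg_left hkey (by positivity)
  _ = (r * h2)⁻¹ * Wasserstein 2 σ ν := hfact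

end Compare

section Main

lemma exists_plane (n d : ℕ) (hnd : n ≤ d) (x : Euc d) :
    ∃ L : AffineSubspace ℝ (Euc d), IsAffinePlane n L ∧ x ∈ L := by
  classical
  set f : Fin n → Euc d :=
    fun i => (EuclideanSpace.basisFun (Fin d) ℝ).toBasis (Fin.castLE hnd i) with hf
  have hli : LinearIndependent ℝ f :=
    (EuclideanSpace.basisFun (Fin d) ℝ).toBasis.linearIndependent.comp
      (Fin.castLE hnd) (Fin.castLE_injective hnd)
  set V : Submodule ℝ (Euc d) := Submodule.span ℝ (Set.range f) with hV
  have hrank : Module.finrank ℝ V = n := by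
    rw [hV, finrank_span_eq_card hli, Fintype.card_fin]
  refine ⟨AffineSubspace.mk' x V, ⟨⟨x, AffineSubspace.self_mem_mk' x V⟩, ?_⟩,
    AffineSubspace.self_mem_mk' x V⟩
  rw [AffineSubspace.direction_mk']
  exact hrank


end Main

/-- For a Radon measure `μ` and a ball `B` intersecting `supp μ`,
`α_μ(B) ≤ α_{μ,1}(B) ≤ α_{μ,2}(B)`. -/
theorem statement5 (n d : ℕ) (hn : 1 ≤ n) (hnd : n ≤ d)
    (φ : Euc d → ℝ) (hφ : IsBumpFn φ)
    (μ : Measure (Euc d)) [IsLocallyFiniteMeasure μ]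
    (x : Euc d) (r : ℝ) (hr : 0 < r)
    (hB : (ball x r ∩ measureSupport μ).Nonempty) :
    alphaCoef n μ x r ≤ alphaP n 1 φ μ x r ∧ alphaP n 1 φ μ x r ≤ alphaP n 2 φ μ x r := by
  obtain ⟨L₀, hL₀, hL₀x⟩ := exists_plane n d hnd x
  have hL₀b : ((L₀ : Set (Euc d)) ∩ ball x r).Nonempty := ⟨x, hL₀x, mem_ball_self hr⟩
  have hSP1ne : { a | ∃ L : AffineSubspace ℝ (Euc d), IsAffinePlane n L ∧
      ((L : Set (Euc d)) ∩ ball x r).Nonempty ∧ a = alphaPVal n 1 φ μ x r L }.Nonempty :=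
    ⟨_, L₀, hL₀, hL₀b, rfl⟩
  have hSP2ne : { a | ∃ L : AffineSubspace ℝ (Euc d), IsAffinePlane n L ∧
      ((L : Set (Euc d)) ∩ ball x r).Nonempty ∧ a = alphaPVal n 2 φ μ x r L }.Nonempty :=
    ⟨_, L₀, hL₀, hL₀b, rfl⟩
  constructor
  · -- α ≤ α₁
    apply le_csInf hSP1ne
    rintro a ⟨L, hL, hLb, rfl⟩
    set HL := (μH[(n : ℝ)]).restrict (L : Set (Euc d)) with hHL
    set aB := (∫ z, phiB φ x r z ∂μ) / ∫ z, phiB φ x r z ∂HL with haB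
    have haBnn : 0 ≤ aB :=
      div_nonneg (integral_nonneg fun y => phiB_nonneg hφ y)
        (integral_nonneg fun y => phiB_nonneg hφ y)
    have h1 : alphaCoef n μ x r ≤ alphaVal n μ x r aB L := by
      apply csInf_le
      · refine ⟨0, ?_⟩
        rintro v ⟨c, hc, L', hL', rfl⟩
        exact alphaVal_nonneg hr c L'
      · exact ⟨aB, haBnn, L, hL, rfl⟩
    refine h1.trans ?_
    set σ := μ.withDensity fun y => ENNReal.ofReal (phiB φ x r y) with hσdef
    set ν := (((μH[(n : ℝ)]).restrict (L : Set (Euc d))).withDensity fun y =>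
        ENNReal.ofReal
          (((∫ z, phiB φ x r z ∂μ) /
              ∫ z, phiB φ x r z ∂((μH[(n : ℝ)]).restrict (L : Set (Euc d)))) *
            phiB φ x r y)) with hνdef
    have hplan := plan_exists hφ hr hn hL.2 hLb hB
    have hWne : { w | ∃ π : Measure (Euc d × Euc d),
        π.map Prod.fst = σ ∧ π.map Prod.snd = ν ∧
        w = (∫ z, dist z.1 z.2 ^ (1:ℝ) ∂π) ^ (1 / (1:ℝ)) }.Nonempty := by
      obtain ⟨π₀, h₀1, h₀2⟩ := hplan
      exact ⟨_, π₀, h₀1, h₀2, rfl⟩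
    have hF : Fdist (ball x r) μ (flatMeasure n aB L) ≤ Wasserstein 1 σ ν := by
      apply le_csInf hWne
      rintro w ⟨π, hfst, hsnd, rfl⟩
      have hle := Fdist_le_plan hφ hr hfst hsnd
      calc Fdist (ball x r) μ (flatMeasure n aB L) ≤ ∫ z, dist z.1 z.2 ∂π := hle
      _ = (∫ z, dist z.1 z.2 ^ (1:ℝ) ∂π) ^ (1 / (1:ℝ)) := by
          simp [Real.rpow_one]
    show alphaVal n μ x r aB L ≤ alphaPVal n 1 φ μ x r L
    show Fdist (ball x r) μ (flatMeasure n aB L) / (r * (μ (ball x (3 * r))).toReal)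
        ≤ (r * (μ (ball x (3 * r))).toReal ^ ((1:ℝ) / 1))⁻¹ * Wasserstein 1 σ ν
    rw [show ((μ (ball x (3 * r))).toReal) ^ ((1:ℝ)/1)
        = (μ (ball x (3 * r))).toReal by rw [show (1:ℝ)/1 = 1 by norm_num, Real.rpow_one]]
    rw [div_eq_inv_mul]
    apply mul_le_mul_of_nonneg_left hF
    have : (0:ℝ) ≤ r * (μ (ball x (3 * r))).toReal :=
      mul_nonneg hr.le ENNReal.toReal_nonneg
    positivity
  · -- α₁ ≤ α₂
    apply le_csInf hSP2ne
    rintro a ⟨L, hL, hLb, rfl⟩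
    have h1 : alphaP n 1 φ μ x r ≤ alphaPVal n 1 φ μ x r L := by
      apply csInf_le
      · refine ⟨0, ?_⟩
        rintro v ⟨L', hL', hLb', rfl⟩
        exact alphaPVal_nonneg hr 1 L'
      · exact ⟨L, hL, hLb, rfl⟩
    exact h1.trans (alphaPVal_one_le_two hφ hr L)



end
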